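/- For all y > 0 and R > 0, ∫₀^∞ e^{−y p²/(2R)} · I₁(p) dp = e^{R/(2y)} − 1. -/

import Mathlib

open Real MeasureTheory

/-- Modified Bessel function of the first kind of integer order `ν`. -/
noncomputable def besselI (ν : ℕ) (x : ℝ) : ℝ :=
  ∑' k : ℕ, (x / 2) ^ (2 * k + ν) / ((Nat.factorial k : ℝ) * (Nat.factorial (k + ν) : ℝ))

lemma aux_int_pow (a : ℝ) (ha : 0 < a) (k : ℕ) :
    ∫ p in Set.Ioi (0:ℝ), p ^ (2 * k + 1) * Real.exp (-a * p ^ 2) =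
      (Nat.factorial k : ℝ) / (2 * a ^ (k + 1)) := by
  have h1 : ∫ p in Set.Ioi (0:ℝ), p ^ (2 * k + 1) * Real.exp (-a * p ^ 2) =
      ∫ p in Set.Ioi (0:ℝ), p ^ ((2 * k + 1 : ℕ) : ℝ) * Real.exp (-a * p ^ (2:ℝ)) := by
    refine setIntegral_congr_fun measurableSet_Ioi (fun x hx => ?_)
    rw [Real.rpow_natCast, Real.rpow_two]
  have hq : (-1:ℝ) < ((2 * k + 1 : ℕ) : ℝ) := by push_cast; linarith [Nat.cast_nonneg (α := ℝ) k]
  rw [h1, integral_rpow_mul_exp_neg_mul_rpow (by norm_num) hq ha]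
  have h2 : (((2 * k + 1 : ℕ) : ℝ) + 1) / 2 = (k : ℝ) + 1 := by push_cast; ring
  have h3 : -(((2 * k + 1 : ℕ) : ℝ) + 1) / 2 = -((k : ℝ) + 1) := by push_cast; ring
  rw [h2, h3, Real.Gamma_nat_eq_factorial,
    show -((k : ℝ) + 1) = -(((k+1 : ℕ)):ℝ) by push_cast; ring,
    Real.rpow_neg ha.le, Real.rpow_natCast]
  rw [eq_div_iff (by positivity)]
  field_simp

lemma aux_pt (e x A : ℝ) (k : ℕ) (hA : A ≠ 0) :
    e * ((x / 2) ^ (2 * k + 1) / A) = (1 / (2 ^ (2 * k + 1) * A)) * (x ^ (2 * k + 1) * e) := by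
  have h2 : (2:ℝ) ^ (2 * k + 1) ≠ 0 := by positivity
  rw [div_pow]
  field_simp

lemma aux_alg (a A B : ℝ) (ha : a ≠ 0) (hA : A ≠ 0) (hB : B ≠ 0) (k : ℕ) :
    1 / (2 ^ (2 * k + 1) * (A * B)) * (A / (2 * a ^ (k + 1))) = (1 / (4 * a)) ^ (k + 1) / B := by
  have h4 : ((4:ℝ) * a) ^ (k + 1) = 2 ^ (2 * k + 1) * 2 * a ^ (k + 1) := by
    have h44 : (4:ℝ) ^ (k + 1) = 2 ^ (2 * k + 1) * 2 := by
      rw [show (4:ℝ) = 2 ^ 2 by norm_num, ← pow_mul, show 2 * (k + 1) = 2 * k + 1 + 1 by ring,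
        pow_succ]
    rw [mul_pow, h44]
  have h2 : (2:ℝ) ^ (2 * k + 1) ≠ 0 := by positivity
  have hak : a ^ (k + 1) ≠ 0 := pow_ne_zero _ ha
  rw [div_pow, one_pow, h4]
  field_simp

theorem stmt9 (y R : ℝ) (hy : 0 < y) (hR : 0 < R) :
    (∫ p in Set.Ioi (0:ℝ), Real.exp (-y * p ^ 2 / (2 * R)) * besselI 1 p) =
      Real.exp (R / (2 * y)) - 1 := by
  set a := y / (2 * R) with ha_def
  have ha : 0 < a := by positivity
  set c := R / (2 * y) with hc_def
  have hc : 0 < c := by positivity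
  have hca : c = 1 / (4 * a) := by
    rw [hc_def, ha_def]; field_simp; ring
  -- the termwise functions
  set F : ℕ → ℝ → ℝ := fun k p =>
    Real.exp (-a * p ^ 2) *
      ((p / 2) ^ (2 * k + 1) / ((Nat.factorial k : ℝ) * (Nat.factorial (k + 1) : ℝ))) with hF
  have hexp_eq : ∀ p : ℝ, Real.exp (-y * p ^ 2 / (2 * R)) = Real.exp (-a * p ^ 2) := by
    intro p; congr 1; rw [ha_def]; field_simp
  -- each F k is integrable on Ioi 0
  have hFint : ∀ k : ℕ, IntegrableOn (F k) (Set.Ioi (0:ℝ)) := by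
    intro k
    have base : IntegrableOn (fun p : ℝ => p ^ ((2 * k + 1 : ℕ) : ℝ) * Real.exp (-a * p ^ 2))
        (Set.Ioi (0:ℝ)) := integrableOn_rpow_mul_exp_neg_mul_sq ha
          (by push_cast; linarith [Nat.cast_nonneg (α := ℝ) k])
    have : IntegrableOn (fun p : ℝ =>
        (1 / (2 ^ (2 * k + 1) * ((Nat.factorial k : ℝ) * (Nat.factorial (k + 1) : ℝ)))) *
          (p ^ ((2 * k + 1 : ℕ) : ℝ) * Real.exp (-a * p ^ 2))) (Set.Ioi (0:ℝ)) :=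
      base.const_mul _
    refine this.congr_fun (fun x hx => ?_) measurableSet_Ioi
    have hfk : (Nat.factorial k : ℝ) ≠ 0 := Nat.cast_ne_zero.mpr (Nat.factorial_ne_zero k)
    have hfk1 : (Nat.factorial (k+1) : ℝ) ≠ 0 := Nat.cast_ne_zero.mpr (Nat.factorial_ne_zero _)
    rw [hF]
    simp only
    rw [Real.rpow_natCast]
    exact (aux_pt _ _ _ k (mul_ne_zero hfk hfk1)).symm
  -- value of each integral
  have hFval : ∀ k : ℕ, ∫ p in Set.Ioi (0:ℝ), F k p =
      c ^ (k + 1) / (Nat.factorial (k + 1) : ℝ) := by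
    intro k
    have hfk : (Nat.factorial k : ℝ) ≠ 0 := Nat.cast_ne_zero.mpr (Nat.factorial_ne_zero k)
    have hfk1 : (Nat.factorial (k+1) : ℝ) ≠ 0 := Nat.cast_ne_zero.mpr (Nat.factorial_ne_zero _)
    have : ∫ p in Set.Ioi (0:ℝ), F k p =
        (1 / (2 ^ (2 * k + 1) * ((Nat.factorial k : ℝ) * (Nat.factorial (k + 1) : ℝ)))) *
          ∫ p in Set.Ioi (0:ℝ), p ^ (2 * k + 1) * Real.exp (-a * p ^ 2) := by
      rw [← integral_const_mul]
      refine setIntegral_congr_fun measurableSet_Ioi (fun x hx => ?_)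
      rw [hF]; simp only
      exact aux_pt _ _ _ k (mul_ne_zero hfk hfk1)
    rw [this, aux_int_pow a ha k, hca]
    exact aux_alg a _ _ ha.ne' hfk hfk1 k
  -- summability of integrals of norms
  have hFnorm : ∀ k : ℕ, (∫ p in Set.Ioi (0:ℝ), ‖F k p‖) =
      c ^ (k + 1) / (Nat.factorial (k + 1) : ℝ) := by
    intro k
    rw [← hFval k]
    refine setIntegral_congr_fun measurableSet_Ioi (fun x hx => ?_)
    rw [Real.norm_of_nonneg]
    rw [hF]; simp only
    have hx' : (0:ℝ) < x := hx
    positivity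
  have hsum : Summable fun k : ℕ => ∫ p in Set.Ioi (0:ℝ), ‖F k p‖ := by
    rw [funext hFnorm]
    have := (Real.summable_pow_div_factorial c).comp_injective (add_left_injective 1)
    exact this
  -- interchange
  have hinter := integral_tsum_of_summable_integral_norm hFint hsum
  have hintegrand : ∀ p : ℝ, Real.exp (-y * p ^ 2 / (2 * R)) * besselI 1 p = ∑' k, F k p := by
    intro p
    rw [hexp_eq, besselI, ← tsum_mul_left]
  calc (∫ p in Set.Ioi (0:ℝ), Real.exp (-y * p ^ 2 / (2 * R)) * besselI 1 p)
      = ∫ p in Set.Ioi (0:ℝ), ∑' k, F k p := by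
        refine setIntegral_congr_fun measurableSet_Ioi (fun x _ => hintegrand x)
    _ = ∑' k, ∫ p in Set.Ioi (0:ℝ), F k p := hinter.symm
    _ = ∑' k : ℕ, c ^ (k + 1) / (Nat.factorial (k + 1) : ℝ) := by
        exact tsum_congr hFval
    _ = Real.exp c - 1 := by
        have hexp : Real.exp c = ∑' n : ℕ, c ^ n / (Nat.factorial n : ℝ) := by
          rw [Real.exp_eq_exp_ℝ, NormedSpace.exp_eq_tsum_div]
        have hs : Summable fun n : ℕ => c ^ n / (Nat.factorial n : ℝ) :=
          Real.summable_pow_div_factorial c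
        rw [hexp, Summable.tsum_eq_zero_add hs]
        simp
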